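/- For every integer a ≥ 2 and every m ≥ 1, the greatest common divisor of Φ_m(a) and m is either 1 or a prime number p; in the latter case m = p^e · o_p(a) for some e ≥ 1. -/

import Mathlib

open Polynomial


lemma keyA {p m : ℕ} (hp : p.Prime) (a : ℤ) (hpm : p ∣ m) (hm : 0 < m)
    (hdvd : (p : ℤ) ∣ (cyclotomic m ℤ).eval a) :
    m = p ^ (m.factorization p) * orderOf ((a : ZMod p)) ∧ 1 ≤ m.factorization p ∧
    orderOf ((a : ZMod p)) ∣ p - 1 ∧ ¬ (p : ℤ) ∣ a := by
  haveI : Fact p.Prime := ⟨hp⟩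
  set k := m.factorization p with hk
  set m' := m / p ^ k with hm'
  have hk1 : 1 ≤ k := (hp.factorization_pos_of_dvd hm.ne' hpm)
  have hmm : p ^ k * m' = m := Nat.ordProj_mul_ordCompl_eq_self m p
  have hpm' : ¬ p ∣ m' := Nat.not_dvd_ordCompl hp hm.ne'
  have hm'pos : 0 < m' := Nat.ordCompl_pos p hm.ne'
  haveI : NeZero ((m' : ℕ) : ZMod p) :=
    ⟨by rwa [Ne, ZMod.natCast_eq_zero_iff]⟩
  have hroot : (cyclotomic m (ZMod p)).IsRoot ((a : ℤ) : ZMod p) := by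
    have h1 : (cyclotomic m (ZMod p)).eval ((a : ℤ) : ZMod p)
        = (((cyclotomic m ℤ).eval a : ℤ) : ZMod p) := by
      rw [← map_cyclotomic_int m (ZMod p), eval_intCast_map]
      rfl
    rw [IsRoot.def, h1, ZMod.intCast_zmod_eq_zero_iff_dvd]
    exact hdvd
  rw [← hmm] at hroot
  have hprim : IsPrimitiveRoot ((a : ℤ) : ZMod p) m' :=
    (isRoot_cyclotomic_prime_pow_mul_iff_of_charP).1 hroot
  have hord : orderOf ((a : ℤ) : ZMod p) = m' := hprim.eq_orderOf.symm
  have hane : ((a : ℤ) : ZMod p) ≠ 0 := by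
    intro h0
    have := hprim.pow_eq_one
    rw [h0, zero_pow hm'pos.ne'] at this
    exact zero_ne_one this
  refine ⟨by rw [hord, hmm], hk1, ?_, ?_⟩
  · exact ZMod.orderOf_dvd_card_sub_one hane
  · rwa [Ne, ZMod.intCast_zmod_eq_zero_iff_dvd] at hane


lemma keyB {p m : ℕ} (hp : p.Prime) {a : ℤ} (ha : 2 ≤ a) (hm : 0 < m)
    (hpm : p ∣ m) (hpa : ¬ (p : ℤ) ∣ a) (hord : (p : ℤ) ∣ a ^ (m / p) - 1)
    (h4 : p = 2 → 4 ∣ m) :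
    ¬ (p : ℤ) ^ 2 ∣ (cyclotomic m ℤ).eval a := by
  intro hc
  set n := m / p with hn
  have hnm : n ∣ m := Nat.div_dvd_of_dvd hpm
  have hnlt : n < m := Nat.div_lt_self hm hp.one_lt
  have hnpos : 0 < n := Nat.div_pos (Nat.le_of_dvd hm hpm) hp.pos
  have hprop : n ∈ m.properDivisors := Nat.mem_properDivisors.2 ⟨hnm, hnlt⟩
  have hdvdpoly := X_pow_sub_one_mul_cyclotomic_dvd_X_pow_sub_one_of_dvd ℤ hprop
  have hdvd : (a ^ n - 1) * (cyclotomic m ℤ).eval a ∣ a ^ m - 1 := by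
    have := Polynomial.eval_dvd (x := a) hdvdpoly
    simpa using this
  set x := a ^ n with hx
  have hx1 : 1 < x := one_lt_pow₀ (by omega) hnpos.ne'
  have hxm : x ^ p = a ^ m := by rw [hx, ← pow_mul, Nat.div_mul_cancel hpm]
  have hpx : ¬ (p : ℤ) ∣ x := fun h => hpa ((Nat.prime_iff_prime_int.mp hp).dvd_of_dvd_pow h)
  -- LTE
  have hlte : emultiplicity (p : ℤ) (x ^ p - 1 ^ p)
      = emultiplicity (p : ℤ) (x - 1) + 1 := by
    rcases hp.eq_two_or_odd' with h2 | hodd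
    · subst h2
      obtain ⟨s, hs⟩ := h4 rfl
      have hneven : n = 2 * s := by omega
      have h41 : (4 : ℤ) ∣ x - 1 := by
        have hodda : Odd (a ^ s) := by
          rcases Int.even_or_odd a with he | ho
          · exact absurd (by exact_mod_cast he.two_dvd) hpa
          · exact ho.pow
        have := Int.sq_mod_four_eq_one_of_odd hodda
        have hxsq : x = (a ^ s) ^ 2 := by
          rw [hx, hneven, ← pow_mul, mul_comm s 2]
        omega
      have := Int.two_pow_sub_pow' (x := x) (y := 1) 2 (by simpa using h41) hpx
      simp only [Nat.cast_ofNat] at this ⊢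
      rw [this]
      congr 1
      exact (Int.finiteMultiplicity_iff.2 ⟨by norm_num, by norm_num⟩).emultiplicity_self
    · exact emultiplicity_pow_prime_sub_pow_prime (Nat.prime_iff_prime_int.mp hp) hodd
        (by simpa using hord) hpx
  have hxne : x - 1 ≠ 0 := by omega
  have hfin : FiniteMultiplicity (p : ℤ) (x - 1) :=
    Int.finiteMultiplicity_iff.2 ⟨by simpa using hp.ne_one, hxne⟩
  set v := multiplicity (p : ℤ) (x - 1) with hv
  have hvd : (p : ℤ) ^ v ∣ x - 1 := pow_multiplicity_dvd _ _
  have hbig : (p : ℤ) ^ (v + 2) ∣ x ^ p - 1 ^ p := by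
    rw [one_pow, hxm]
    calc (p : ℤ) ^ (v + 2) = (p : ℤ) ^ v * (p : ℤ) ^ 2 := by ring
    _ ∣ (x - 1) * (cyclotomic m ℤ).eval a := mul_dvd_mul hvd hc
    _ ∣ a ^ m - 1 := by simpa [hx] using hdvd
  have hle : ((v + 2 : ℕ) : ℕ∞) ≤ emultiplicity (p : ℤ) (x ^ p - 1 ^ p) :=
    le_emultiplicity_of_pow_dvd hbig
  rw [hlte, hfin.emultiplicity_eq_multiplicity, ← hv] at hle
  have : (v + 2 : ℕ) ≤ (v + 1 : ℕ) := by exact_mod_cast hle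
  omega
/-- For every `a ≥ 2` and `m ≥ 1`, `gcd(Φ_m(a), m)` equals `1` or a prime
`p`, in which case `m = p ^ e * o_p(a)` with `e ≥ 1`. -/

theorem gcd_cyclotomic_eval_eq_one_or_prime
    (a : ℤ) (ha : 2 ≤ a) (m : ℕ) (hm : 1 ≤ m) :
    Int.gcd ((Polynomial.cyclotomic m ℤ).eval a) (m : ℤ) = 1 ∨
      ∃ p : ℕ, p.Prime ∧
        Int.gcd ((Polynomial.cyclotomic m ℤ).eval a) (m : ℤ) = p ∧
        ∃ e : ℕ, 1 ≤ e ∧ m = p ^ e * orderOf ((a : ZMod p)) := by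
  set g := Int.gcd ((cyclotomic m ℤ).eval a) (m : ℤ) with hg
  by_cases hg1 : g = 1
  · exact Or.inl hg1
  right
  have hgm : g ∣ m := by
    have h : (g : ℤ) ∣ (m : ℤ) := Int.gcd_dvd_right _ _
    exact_mod_cast h
  have hgΦ : (g : ℤ) ∣ (cyclotomic m ℤ).eval a := Int.gcd_dvd_left _ _
  have hg0 : g ≠ 0 := by
    intro h0
    rw [h0] at hgm
    omega
  -- every prime dividing g gives the keyA structure
  have key : ∀ q : ℕ, q.Prime → q ∣ g →
      m = q ^ (m.factorization q) * orderOf ((a : ZMod q)) ∧ 1 ≤ m.factorization q ∧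
      orderOf ((a : ZMod q)) ∣ q - 1 ∧ ¬ (q : ℤ) ∣ a := by
    intro q hq hqg
    exact keyA hq a (hqg.trans hgm) hm
      ((Int.natCast_dvd_natCast.2 hqg).trans hgΦ)
  set p := g.minFac with hpdef
  have hp : p.Prime := Nat.minFac_prime hg1
  have hpg : p ∣ g := Nat.minFac_dvd g
  obtain ⟨hmp, hk1, hdp, hpa⟩ := key p hp hpg
  set K := m.factorization p with hK
  -- all primes dividing g are equal to p
  have huniq : ∀ q : ℕ, q.Prime → q ∣ g → q = p := by
    intro q hq hqg
    by_contra hne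
    obtain ⟨hmq, hj1, hdq, hqa⟩ := key q hq hqg
    have hqm : q ∣ m := hqg.trans hgm
    have hpm : p ∣ m := hpg.trans hgm
    have hqp : q ∣ orderOf ((a : ZMod p)) := by
      have := hqm
      rw [hmp] at this
      rcases (Nat.Prime.dvd_mul hq).1 this with h | h
      · exact absurd (hq.dvd_of_dvd_pow h) (fun hh => hne (((Nat.prime_dvd_prime_iff_eq hq hp).1 hh)))
      · exact h
    have hpq : p ∣ orderOf ((a : ZMod q)) := by
      have := hpm
      rw [hmq] at this
      rcases (Nat.Prime.dvd_mul hp).1 this with h | h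
      · exact absurd (hp.dvd_of_dvd_pow h) (fun hh => hne (((Nat.prime_dvd_prime_iff_eq hp hq).1 hh)).symm)
      · exact h
    have h1 : q ≤ p - 1 := Nat.le_of_dvd (by have := hp.two_le; omega) (hqp.trans hdp)
    have h2 : p ≤ q - 1 := Nat.le_of_dvd (by have := hq.two_le; omega) (hpq.trans hdq)
    omega
  -- p^2 does not divide g
  have hsq : ¬ p ^ 2 ∣ g := by
    intro hc
    have hc2 : (p : ℤ) ^ 2 ∣ (cyclotomic m ℤ).eval a := by
      have : ((p ^ 2 : ℕ) : ℤ) ∣ (g : ℤ) := Int.natCast_dvd_natCast.2 hc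
      push_cast at this
      exact this.trans hgΦ
    have hpm : p ∣ m := hpg.trans hgm
    have hord : (p : ℤ) ∣ a ^ (m / p) - 1 := by
      rw [← ZMod.intCast_zmod_eq_zero_iff_dvd]
      push_cast
      rw [sub_eq_zero]
      have hsplit : p ^ K = p * p ^ (K - 1) := by
        rw [← pow_succ']
        congr 1
        omega
      have hmd : m / p = p ^ (K - 1) * orderOf ((a : ZMod p)) := by
        rw [hmp, hsplit, mul_assoc, Nat.mul_div_cancel_left _ hp.pos]
      have hdvd2 : orderOf ((a : ZMod p)) ∣ m / p := by
        rw [hmd]; exact dvd_mul_left _ _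
      have := orderOf_dvd_iff_pow_eq_one.1 hdvd2
      rw [this]
    have h4 : p = 2 → 4 ∣ m := by
      intro h2
      have : p ^ 2 ∣ m := hc.trans hgm
      rw [h2] at this
      simpa using this
    exact keyB hp ha (by omega) hpm hpa hord h4 hc2
  -- conclude g = p
  have hgp : g = p := by
    by_contra hne
    have ht : g / p ≠ 1 := by
      intro h1
      apply hne
      have := Nat.div_mul_cancel hpg
      rw [h1, one_mul] at this
      omega
    have ht0 : g / p ≠ 0 := by
      intro h0
      have := Nat.div_mul_cancel hpg
      rw [h0, zero_mul] at this
      omega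
    have hqp : (g / p).minFac.Prime := Nat.minFac_prime ht
    have hqg : (g / p).minFac ∣ g := (Nat.minFac_dvd _).trans (Nat.div_dvd_of_dvd hpg)
    have hq2 : (g / p).minFac = p := huniq _ hqp hqg
    apply hsq
    have hpd : p ∣ g / p := (dvd_of_eq hq2.symm).trans (Nat.minFac_dvd (g / p))
    have hdvd3 : p * p ∣ (g / p) * p := mul_dvd_mul hpd dvd_rfl
    rw [Nat.div_mul_cancel hpg] at hdvd3
    rwa [pow_two]
  exact ⟨p, hp, hgp, K, hk1, hmp⟩
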